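/- arXiv:math/0608642 — 7 statements merged into one kernel-verified Lean document; each statement's English description precedes it below -/
import Mathlib

section
/- Suppose κ is an infinite cardinal with κ^{<κ} = κ and P is a strongly κ-dense partial order. Then P contains a subset Q of cardinality κ such that Q with the induced order is strongly κ-dense. -/
open Cardinal Set

universe u

/-- A partial order is strongly κ-dense if for all subsets `S`, `T` of size `< κ`
with `S < T` there is an element strictly between them. -/
def StronglyDense (κ : Cardinal.{u}) (P : Type u) [Preorder P] : Prop :=
  ∀ S T : Set P, #S < κ → #T < κ → (∀ s ∈ S, ∀ t ∈ T, s < t) →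
    ∃ x : P, (∀ s ∈ S, s < x) ∧ (∀ t ∈ T, x < t)

/-- A partial order is weakly κ-scattered if no suborder is strongly κ-dense. -/
def WeaklyScattered (κ : Cardinal.{u}) (P : Type u) [Preorder P] : Prop :=
  ∀ A : Set P, ¬ StronglyDense κ ↥A

/-- An order is weakly κ-dense if it has at least two elements and every open
interval `(s, t)` with `s < t` has cardinality at least `κ`. -/
def WeaklyDense (κ : Cardinal.{u}) (P : Type u) [Preorder P] : Prop :=
  2 ≤ #P ∧ ∀ s t : P, s < t → κ ≤ #{x : P | s < x ∧ x < t}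

/-- An order is strongly κ-scattered if no suborder is weakly κ-dense. -/
def StronglyScattered (κ : Cardinal.{u}) (P : Type u) [Preorder P] : Prop :=
  ∀ A : Set P, ¬ WeaklyDense κ ↥A

/-- An order is κ-well-founded if it has no strictly decreasing sequence of length κ. -/
def KappaWellFounded (κ : Cardinal.{u}) (P : Type u) [Preorder P] : Prop :=
  ¬ ∃ f : κ.ord.ToType → P, StrictAnti f

namespace Stmt2Aux

open Ordinal

theorem isRegular {κ : Cardinal.{u}} (hκ : ℵ₀ ≤ κ) (hpow : κ ^< κ = κ) :
    κ.IsRegular := by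
  refine ⟨hκ, ?_⟩
  by_contra h
  exact (lt_power_cof hκ).not_ge ((le_powerlt κ (lt_of_not_ge h)).trans_eq hpow)

variable {P : Type u} [PartialOrder P]

open Classical in
noncomputable def wit [Nonempty P] (S T : Set P) : P :=
  if h : ∃ x : P, (∀ s ∈ S, s < x) ∧ (∀ t ∈ T, x < t) then h.choose
  else Classical.arbitrary P

theorem wit_spec [Nonempty P] {S T : Set P}
    (h : ∃ x : P, (∀ s ∈ S, s < x) ∧ (∀ t ∈ T, x < t)) :
    (∀ s ∈ S, s < wit S T) ∧ (∀ t ∈ T, wit S T < t) := by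
  classical rw [wit, dif_pos h]; exact h.choose_spec

noncomputable def F [Nonempty P] (κ : Cardinal.{u}) (A : Set P) : Set P :=
  A ∪ ⋃ p : {S : Set P // S ⊆ A ∧ #S < κ} × {S : Set P // S ⊆ A ∧ #S < κ},
    {wit p.1.1 p.2.1}

theorem subset_F [Nonempty P] (κ : Cardinal.{u}) (A : Set P) : A ⊆ F κ A :=
  subset_union_left

theorem wit_mem_F [Nonempty P] {κ : Cardinal.{u}} {A S T : Set P}
    (hS : S ⊆ A) (hS' : #S < κ) (hT : T ⊆ A) (hT' : #T < κ) :
    wit S T ∈ F κ A :=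
  Or.inr (mem_iUnion.2 ⟨(⟨S, hS, hS'⟩, ⟨T, hT, hT'⟩), rfl⟩)

/-- Every cardinal below `κ` is the cardinality of an initial segment of `κ.ord.ToType`. -/
theorem exists_mk_Iio_eq {κ : Cardinal.{u}} {c : Cardinal.{u}} (h : c < κ) :
    ∃ i : κ.ord.ToType, #(Iio i) = c := by
  haveI : IsWellOrder κ.ord.ToType (· < ·) := isWellOrder_lt
  obtain ⟨i, hi⟩ := typein_surj ((· < ·) : κ.ord.ToType → κ.ord.ToType → Prop)
    (by rw [type_toType]; exact ord_lt_ord.2 h)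
  refine ⟨i, ?_⟩
  have := card_typein (r := ((· < ·) : κ.ord.ToType → κ.ord.ToType → Prop)) i
  rw [hi, card_ord] at this
  rw [this]; rfl

/-- Counting small subsets of a `≤ κ`-sized set. -/
theorem count {κ : Cardinal.{u}} (hκ : ℵ₀ ≤ κ) (hpow : κ ^< κ = κ)
    {A : Set P} (hA : #A ≤ κ) : #{S : Set P // S ⊆ A ∧ #S < κ} ≤ κ := by
  have hcov : {S : Set P | S ⊆ A ∧ #S < κ} ⊆
      ⋃ i : κ.ord.ToType, {S : Set P | S ⊆ A ∧ #S ≤ #(Iio i)} := by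
    rintro S ⟨hSA, hSκ⟩
    obtain ⟨i, hi⟩ := exists_mk_Iio_eq hSκ
    exact mem_iUnion.2 ⟨i, hSA, hi.ge⟩
  calc #{S : Set P // S ⊆ A ∧ #S < κ}
      ≤ #(⋃ i : κ.ord.ToType, {S : Set P | S ⊆ A ∧ #S ≤ #(Iio i)}) :=
        mk_le_mk_of_subset hcov
    _ ≤ Cardinal.sum fun i : κ.ord.ToType => #{S : Set P | S ⊆ A ∧ #S ≤ #(Iio i)} :=
        mk_iUnion_le_sum_mk
    _ ≤ Cardinal.sum fun _ : κ.ord.ToType => κ := by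
        refine sum_le_sum _ _ fun i => ?_
        refine (mk_bounded_subset_le A #(Iio i)).trans ?_
        refine (power_le_power_right (max_le hA hκ)).trans ?_
        exact (le_powerlt κ (mk_Iio_ord_toType i)).trans_eq hpow
    _ = #κ.ord.ToType * κ := sum_const' _ _
    _ ≤ κ * κ := by rw [mk_toType, card_ord]
    _ = κ := mul_eq_self hκ

theorem mk_F_le [Nonempty P] {κ : Cardinal.{u}} (hκ : ℵ₀ ≤ κ) (hpow : κ ^< κ = κ)
    {A : Set P} (hA : #A ≤ κ) : #(F κ A) ≤ κ := by
  have h1 : #(⋃ p : {S : Set P // S ⊆ A ∧ #S < κ} × {S : Set P // S ⊆ A ∧ #S < κ},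
      ({wit p.1.1 p.2.1} : Set P)) ≤ κ := by
    refine mk_iUnion_le_sum_mk.trans ?_
    refine (sum_le_sum _ (fun _ => 1) fun p => by simp).trans ?_
    rw [sum_const', mul_one]
    simp only [mk_prod, Cardinal.lift_id]
    calc #{S : Set P // S ⊆ A ∧ #S < κ} * #{S : Set P // S ⊆ A ∧ #S < κ}
        ≤ κ * κ := mul_le_mul' (count hκ hpow hA) (count hκ hpow hA)
      _ = κ := mul_eq_self hκ
  refine (mk_union_le _ _).trans ?_
  calc #A + _ ≤ κ + κ := add_le_add hA h1
    _ = κ := add_eq_self hκ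

noncomputable def chain [Nonempty P] (κ : Cardinal.{u}) : κ.ord.ToType → P :=
  (wellFounded_lt (α := κ.ord.ToType)).fix (C := fun _ => P)
    fun i IH => wit (range fun j : {j // j < i} => IH j j.2) ∅

theorem chain_eq [Nonempty P] (κ : Cardinal.{u}) (i : κ.ord.ToType) :
    chain κ i = wit (range fun j : {j // j < i} => chain (P := P) κ j.1) ∅ := by
  unfold chain
  rw [WellFounded.fix_eq]

theorem chain_strictMono [Nonempty P] {κ : Cardinal.{u}} (hκ : ℵ₀ ≤ κ)
    (hP : StronglyDense κ P) : StrictMono (chain (P := P) κ) := by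
  intro j i hji
  have hS : #(range fun j : {j // j < i} => chain (P := P) κ j.1) < κ :=
    mk_range_le.trans_lt (mk_Iio_ord_toType i)
  have hex := hP _ ∅ hS (by simpa using aleph0_pos.trans_le hκ) (by simp)
  rw [chain_eq κ i]
  exact (wit_spec hex).1 _ ⟨⟨j, hji⟩, rfl⟩

noncomputable def tower [Nonempty P] (κ : Cardinal.{u}) (base : Set P) :
    κ.ord.ToType → Set P :=
  (wellFounded_lt (α := κ.ord.ToType)).fix (C := fun _ => Set P)
    fun i IH => F κ (base ∪ ⋃ j : {j // j < i}, IH j j.2)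

theorem tower_eq [Nonempty P] (κ : Cardinal.{u}) (base : Set P) (i : κ.ord.ToType) :
    tower κ base i = F κ (base ∪ ⋃ j : {j // j < i}, tower (P := P) κ base j.1) := by
  unfold tower
  rw [WellFounded.fix_eq]

theorem base_subset_tower [Nonempty P] (κ : Cardinal.{u}) (base : Set P)
    (i : κ.ord.ToType) : base ⊆ tower κ base i := by
  rw [tower_eq]
  exact subset_union_left.trans (subset_F κ _)

theorem mk_tower_le [Nonempty P] {κ : Cardinal.{u}} (hκ : ℵ₀ ≤ κ) (hpow : κ ^< κ = κ)
    {base : Set P} (hbase : #base ≤ κ) (i : κ.ord.ToType) :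
    #(tower κ base i) ≤ κ := by
  induction i using (wellFounded_lt (α := κ.ord.ToType)).induction with
  | _ i IH =>
    rw [tower_eq]
    refine mk_F_le hκ hpow ?_
    refine (mk_union_le _ _).trans ?_
    have h1 : #(⋃ j : {j // j < i}, tower (P := P) κ base j.1) ≤ κ := by
      refine mk_iUnion_le_sum_mk.trans ?_
      refine (sum_le_sum _ (fun _ => κ) fun (j : {j // j < i}) => IH j.1 j.2).trans ?_
      rw [sum_const']
      calc #{j // j < i} * κ ≤ κ * κ :=
            mul_le_mul' (mk_Iio_ord_toType i).le le_rfl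
        _ = κ := mul_eq_self hκ
    calc #base + _ ≤ κ + κ := add_le_add hbase h1
      _ = κ := add_eq_self hκ

end Stmt2Aux

/-- If κ^{<κ} = κ and P is strongly κ-dense, then P has a strongly κ-dense
suborder of cardinality κ. -/
theorem stmt_2 {P : Type u} [PartialOrder P] (κ : Cardinal.{u}) (hκ : ℵ₀ ≤ κ)
    (hpow : κ ^< κ = κ) (hP : StronglyDense κ P) :
    ∃ Q : Set P, #Q = κ ∧ StronglyDense κ ↥Q := by
  have hemp : #(∅ : Set P) < κ := by simpa using aleph0_pos.trans_le hκ
  obtain ⟨x0, -⟩ := hP ∅ ∅ hemp hemp (by simp)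
  haveI : Nonempty P := ⟨x0⟩
  haveI : Nonempty κ.ord.ToType := by
    rw [← not_isEmpty_iff, Ordinal.toType_empty_iff_eq_zero]
    intro h0
    have : (0 : Ordinal) < κ.ord := lt_ord.2 (by simpa using aleph0_pos.trans_le hκ)
    exact this.ne' h0
  have hreg : κ.IsRegular := Stmt2Aux.isRegular hκ hpow
  set base : Set P := Set.range (Stmt2Aux.chain (P := P) κ) with hbase_def
  have hbase : #base = κ := by
    rw [hbase_def, mk_range_eq _ (Stmt2Aux.chain_strictMono hκ hP).injective,
      Cardinal.mk_toType, card_ord]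
  set Q : Set P := base ∪ ⋃ i, Stmt2Aux.tower (P := P) κ base i with hQ_def
  have hbaseQ : base ⊆ Q := subset_union_left
  have htQ : ∀ i, Stmt2Aux.tower (P := P) κ base i ⊆ Q :=
    fun i => (subset_iUnion _ i).trans subset_union_right
  have hQκ : #Q = κ := by
    apply le_antisymm
    · rw [hQ_def]
      refine (mk_union_le _ _).trans ?_
      have h1 : #(⋃ i, Stmt2Aux.tower (P := P) κ base i) ≤ κ := by
        refine mk_iUnion_le_sum_mk.trans ?_
        refine (sum_le_sum _ (fun _ => κ)
          fun i => Stmt2Aux.mk_tower_le hκ hpow hbase.le i).trans ?_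
        rw [sum_const', Cardinal.mk_toType, card_ord, mul_eq_self hκ]
      calc #base + _ ≤ κ + κ := add_le_add hbase.le h1
        _ = κ := add_eq_self hκ
    · rw [← hbase]; exact mk_le_mk_of_subset hbaseQ
  refine ⟨Q, hQκ, ?_⟩
  intro S T hS hT hST
  set S' : Set P := (↑) '' S with hS'_def
  set T' : Set P := (↑) '' T with hT'_def
  have hS' : #S' < κ := mk_image_le.trans_lt hS
  have hT' : #T' < κ := mk_image_le.trans_lt hT
  have hmem : ∀ x ∈ Q, ∃ i, x ∈ Stmt2Aux.tower (P := P) κ base i := by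
    intro x hx
    rcases hx with hx | hx
    · obtain ⟨i⟩ := ‹Nonempty κ.ord.ToType›
      exact ⟨i, Stmt2Aux.base_subset_tower κ base i hx⟩
    · exact mem_iUnion.1 hx
  choose! idx hidx using hmem
  haveI : IsWellOrder κ.ord.ToType (· < ·) := isWellOrder_lt
  have hbd : Set.Bounded (· < ·) (idx '' (S' ∪ T')) := by
    by_contra hnb
    have hcof : IsCofinal (idx '' (S' ∪ T')) := fun a => by
      by_contra h
      exact hnb ⟨a, fun b hb => lt_of_not_ge (fun hab => h ⟨b, hb, hab⟩)⟩
    have hle := Ordinal.lt_cof_type hcof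
    rw [Ordinal.cof_toType] at hle
    refine (lt_of_lt_of_le ?_ hreg.2).not_ge hle
    exact mk_image_le.trans_lt ((mk_union_le _ _).trans_lt (add_lt_of_lt hκ hS' hT'))
  obtain ⟨i0, hi0⟩ := hbd
  have hUQ : S' ∪ T' ⊆ Q := by
    rintro x (⟨s0, _, rfl⟩ | ⟨t0, _, rfl⟩)
    · exact s0.2
    · exact t0.2
  have hA : S' ∪ T' ⊆ base ∪ ⋃ j : {j // j < i0}, Stmt2Aux.tower (P := P) κ base j.1 := by
    intro x hx
    exact Or.inr (mem_iUnion.2 ⟨⟨idx x, hi0 _ (mem_image_of_mem idx hx)⟩, hidx x (hUQ hx)⟩)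
  have hSA : S' ⊆ base ∪ ⋃ j : {j // j < i0}, Stmt2Aux.tower (P := P) κ base j.1 :=
    subset_union_left.trans hA
  have hTA : T' ⊆ base ∪ ⋃ j : {j // j < i0}, Stmt2Aux.tower (P := P) κ base j.1 :=
    subset_union_right.trans hA
  have hex : ∃ x : P, (∀ s ∈ S', s < x) ∧ (∀ t ∈ T', x < t) := by
    refine hP S' T' hS' hT' ?_
    rintro s ⟨s0, hs0, rfl⟩ t ⟨t0, ht0, rfl⟩
    exact hST s0 hs0 t0 ht0
  have hwitmem : Stmt2Aux.wit S' T' ∈ Q := by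
    refine htQ i0 ?_
    rw [Stmt2Aux.tower_eq]
    exact Stmt2Aux.wit_mem_F hSA hS' hTA hT'
  obtain ⟨h1, h2⟩ := Stmt2Aux.wit_spec hex
  refine ⟨⟨Stmt2Aux.wit S' T', hwitmem⟩, fun s hs => ?_, fun t ht => ?_⟩
  · exact h1 _ (mem_image_of_mem _ hs)
  · exact h2 _ (mem_image_of_mem _ ht)
end

section
/- Let κ be a regular uncountable cardinal and let D be a partial order of cardinality κ which is the union of fewer than κ subsets D_i, each of which is weakly κ-scattered (in the induced order). Then D is weakly κ-scattered. -/
open Cardinal Set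

universe u

namespace Stmt4Aux

variable {P : Type u} [PartialOrder P]

/-- Relative version of strong κ-density for a subset of `P`. -/
def RelSD (κ : Cardinal.{u}) (B : Set P) : Prop :=
  ∀ S T : Set P, S ⊆ B → T ⊆ B → #S < κ → #T < κ → (∀ s ∈ S, ∀ t ∈ T, s < t) →
    ∃ x ∈ B, (∀ s ∈ S, s < x) ∧ (∀ t ∈ T, x < t)

theorem relSD_of_stronglyDense {κ : Cardinal.{u}} {A : Set P}
    (h : StronglyDense κ ↥A) : RelSD κ A := by
  intro S T hS hT hScard hTcard hlt
  have hS' : #(Subtype.val ⁻¹' S : Set ↥A) < κ := by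
    rwa [Cardinal.mk_preimage_of_injective_of_subset_range _ _ Subtype.val_injective
      (by rwa [Subtype.range_coe])]
  have hT' : #(Subtype.val ⁻¹' T : Set ↥A) < κ := by
    rwa [Cardinal.mk_preimage_of_injective_of_subset_range _ _ Subtype.val_injective
      (by rwa [Subtype.range_coe])]
  obtain ⟨x, hx1, hx2⟩ := h (Subtype.val ⁻¹' S) (Subtype.val ⁻¹' T) hS' hT'
    (fun s hs t ht => by exact_mod_cast hlt _ hs _ ht)
  refine ⟨x.1, x.2, fun s hs => ?_, fun t ht => ?_⟩
  · exact hx1 ⟨s, hS hs⟩ hs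
  · exact hx2 ⟨t, hT ht⟩ ht

/-- From a weakly κ-scattered set `E` and `B ⊆ E`, extract a "blocking pair":
subsets `S, T` of `B` of size `< κ` with `S < T` and nothing of `B` strictly
between. -/
theorem exists_blocker {κ : Cardinal.{u}} {E : Set P} (hE : WeaklyScattered κ ↥E)
    {B : Set P} (hBE : B ⊆ E) :
    ∃ p : Set P × Set P, p.1 ⊆ B ∧ p.2 ⊆ B ∧ #p.1 < κ ∧ #p.2 < κ ∧
      (∀ s ∈ p.1, ∀ t ∈ p.2, s < t) ∧
      ∀ x ∈ B, ¬ ((∀ s ∈ p.1, s < x) ∧ (∀ t ∈ p.2, x < t)) := by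
  by_contra hcon
  push_neg at hcon
  apply hE (Subtype.val ⁻¹' B)
  intro S T hScard hTcard hlt
  -- map everything down to `P`
  set f : ↥(Subtype.val ⁻¹' B : Set ↥E) → P := fun x => x.1.1 with hf
  have hfinj : Function.Injective f := fun a b hab => by
    apply Subtype.ext; apply Subtype.ext; exact hab
  have hS' : #(f '' S) < κ := by
    rwa [Cardinal.mk_image_eq hfinj]
  have hT' : #(f '' T) < κ := by
    rwa [Cardinal.mk_image_eq hfinj]
  have hsub1 : f '' S ⊆ B := by
    rintro _ ⟨y, -, rfl⟩; exact y.2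
  have hsub2 : f '' T ⊆ B := by
    rintro _ ⟨y, -, rfl⟩; exact y.2
  have hlt' : ∀ s ∈ f '' S, ∀ t ∈ f '' T, s < t := by
    rintro _ ⟨y, hy, rfl⟩ _ ⟨z, hz, rfl⟩
    exact_mod_cast hlt y hy z hz
  obtain ⟨x, hxB, hx1, hx2⟩ := hcon ⟨f '' S, f '' T⟩
    hsub1 hsub2 hS' hT' hlt'
  refine ⟨⟨⟨x, hBE hxB⟩, hxB⟩, fun s hs => ?_, fun t ht => ?_⟩
  · have : f s < x := hx1 _ ⟨s, hs, rfl⟩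
    exact_mod_cast this
  · have : x < f t := hx2 _ ⟨t, ht, rfl⟩
    exact_mod_cast this

variable {ι : Type u}

/-- The set of elements of `A ∩ D i` strictly between `U` and `V`. -/
def Bset (A : Set P) (D : ι → Set P) (i : ι) (U V : Set P) : Set P :=
  {x | x ∈ A ∧ x ∈ D i ∧ (∀ s ∈ U, s < x) ∧ (∀ t ∈ V, x < t)}

theorem Bset_subset (A : Set P) (D : ι → Set P) (i : ι) (U V : Set P) :
    Bset A D i U V ⊆ D i := fun _ hx => hx.2.1

/-- Chosen blocking pair for `Bset A D i U V` inside `D i`. -/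
noncomputable def blk {κ : Cardinal.{u}} {D : ι → Set P}
    (hDi : ∀ i, WeaklyScattered κ ↥(D i)) (A : Set P) (i : ι) (U V : Set P) :
    Set P × Set P :=
  (exists_blocker (hDi i) (Bset_subset A D i U V)).choose

theorem blk_spec {κ : Cardinal.{u}} {D : ι → Set P}
    (hDi : ∀ i, WeaklyScattered κ ↥(D i)) (A : Set P) (i : ι) (U V : Set P) :
    (blk hDi A i U V).1 ⊆ Bset A D i U V ∧ (blk hDi A i U V).2 ⊆ Bset A D i U V ∧
      #(blk hDi A i U V).1 < κ ∧ #(blk hDi A i U V).2 < κ ∧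
      (∀ s ∈ (blk hDi A i U V).1, ∀ t ∈ (blk hDi A i U V).2, s < t) ∧
      ∀ x ∈ Bset A D i U V,
        ¬ ((∀ s ∈ (blk hDi A i U V).1, s < x) ∧ (∀ t ∈ (blk hDi A i U V).2, x < t)) :=
  (exists_blocker (hDi i) (Bset_subset A D i U V)).choose_spec

/-- The transfinite recursion producing the blocking pairs. -/
noncomputable def F {κ : Cardinal.{u}} {D : ι → Set P}
    (hDi : ∀ i, WeaklyScattered κ ↥(D i)) (A : Set P) : ι → Set P × Set P :=
  (IsWellFounded.wf (r := (WellOrderingRel : ι → ι → Prop))).fix fun i IH =>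
    blk hDi A i (⋃ j, ⋃ h : WellOrderingRel j i, (IH j h).1)
      (⋃ j, ⋃ h : WellOrderingRel j i, (IH j h).2)

/-- Accumulated lower sets. -/
noncomputable def cumS {κ : Cardinal.{u}} {D : ι → Set P}
    (hDi : ∀ i, WeaklyScattered κ ↥(D i)) (A : Set P) (i : ι) : Set P :=
  ⋃ j, ⋃ _h : WellOrderingRel j i, (F hDi A j).1

noncomputable def cumT {κ : Cardinal.{u}} {D : ι → Set P}
    (hDi : ∀ i, WeaklyScattered κ ↥(D i)) (A : Set P) (i : ι) : Set P :=
  ⋃ j, ⋃ _h : WellOrderingRel j i, (F hDi A j).2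

theorem F_eq {κ : Cardinal.{u}} {D : ι → Set P}
    (hDi : ∀ i, WeaklyScattered κ ↥(D i)) (A : Set P) (i : ι) :
    F hDi A i = blk hDi A i (cumS hDi A i) (cumT hDi A i) :=
  WellFounded.fix_eq _ _ i

theorem F_spec {κ : Cardinal.{u}} {D : ι → Set P}
    (hDi : ∀ i, WeaklyScattered κ ↥(D i)) (A : Set P) (i : ι) :
    (F hDi A i).1 ⊆ Bset A D i (cumS hDi A i) (cumT hDi A i) ∧
      (F hDi A i).2 ⊆ Bset A D i (cumS hDi A i) (cumT hDi A i) ∧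
      #(F hDi A i).1 < κ ∧ #(F hDi A i).2 < κ ∧
      (∀ s ∈ (F hDi A i).1, ∀ t ∈ (F hDi A i).2, s < t) ∧
      ∀ x ∈ Bset A D i (cumS hDi A i) (cumT hDi A i),
        ¬ ((∀ s ∈ (F hDi A i).1, s < x) ∧ (∀ t ∈ (F hDi A i).2, x < t)) := by
  rw [F_eq hDi A i]
  exact blk_spec hDi A i _ _

end Stmt4Aux

open Stmt4Aux in
/-- A partial order of size κ which is a union of fewer than κ weakly κ-scattered
suborders is weakly κ-scattered. -/
theorem stmt_4 {P : Type u} [PartialOrder P] (κ : Cardinal.{u}) (hκ : κ.IsRegular)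
    (hunc : ℵ₀ < κ) (hcard : #P = κ) {ι : Type u} (hι : #ι < κ) (D : ι → Set P)
    (hcov : ⋃ i, D i = Set.univ) (hDi : ∀ i, WeaklyScattered κ ↥(D i)) :
    WeaklyScattered κ P := by
  intro A hA
  have hA' : RelSD κ A := relSD_of_stronglyDense hA
  set SS : Set P := ⋃ i, (F hDi A i).1 with hSS
  set TT : Set P := ⋃ i, (F hDi A i).2 with hTT
  have hSSA : SS ⊆ A := by
    rintro x hx
    obtain ⟨i, hi⟩ := mem_iUnion.1 hx
    exact ((F_spec hDi A i).1 hi).1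
  have hTTA : TT ⊆ A := by
    rintro x hx
    obtain ⟨i, hi⟩ := mem_iUnion.1 hx
    exact ((F_spec hDi A i).2.1 hi).1
  have hSScard : #SS < κ :=
    Cardinal.mk_iUnion_le_sum_mk.trans_lt
      (Cardinal.sum_lt_of_isRegular hκ hι fun i => (F_spec hDi A i).2.2.1)
  have hTTcard : #TT < κ :=
    Cardinal.mk_iUnion_le_sum_mk.trans_lt
      (Cardinal.sum_lt_of_isRegular hκ hι fun i => (F_spec hDi A i).2.2.2.1)
  have hlt : ∀ s ∈ SS, ∀ t ∈ TT, s < t := by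
    intro s hs t ht
    obtain ⟨i, hi⟩ := mem_iUnion.1 hs
    obtain ⟨j, hj⟩ := mem_iUnion.1 ht
    rcases trichotomous_of (WellOrderingRel : ι → ι → Prop) i j with h | h | h
    · -- i ≺ j : s ∈ cumS j, t ∈ Bset at j
      have ht' := (F_spec hDi A j).2.1 hj
      exact ht'.2.2.1 s (mem_iUnion.2 ⟨i, mem_iUnion.2 ⟨h, hi⟩⟩)
    · subst h
      exact (F_spec hDi A i).2.2.2.2.1 s hi t hj
    · -- j ≺ i : t ∈ cumT i, s ∈ Bset at i
      have hs' := (F_spec hDi A i).1 hi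
      exact hs'.2.2.2 t (mem_iUnion.2 ⟨j, mem_iUnion.2 ⟨h, hj⟩⟩)
  obtain ⟨x, hxA, hx1, hx2⟩ := hA' SS TT hSSA hTTA hSScard hTTcard hlt
  have hxu : x ∈ ⋃ i, D i := hcov ▸ mem_univ x
  obtain ⟨j, hj⟩ := mem_iUnion.1 hxu
  have hxB : x ∈ Bset A D j (cumS hDi A j) (cumT hDi A j) := by
    refine ⟨hxA, hj, fun s hs => ?_, fun t ht => ?_⟩
    · obtain ⟨k, hk⟩ := mem_iUnion.1 hs
      obtain ⟨hk', hks⟩ := mem_iUnion.1 hk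
      exact hx1 s (mem_iUnion.2 ⟨k, hks⟩)
    · obtain ⟨k, hk⟩ := mem_iUnion.1 ht
      obtain ⟨hk', hkt⟩ := mem_iUnion.1 hk
      exact hx2 t (mem_iUnion.2 ⟨k, hkt⟩)
  exact (F_spec hDi A j).2.2.2.2.2 x hxB
    ⟨fun s hs => hx1 s (mem_iUnion.2 ⟨j, hs⟩), fun t ht => hx2 t (mem_iUnion.2 ⟨j, ht⟩)⟩
end

section
/- Let κ be a regular cardinal and λ = κ^{<κ}. If every augmentation of a partial order P is weakly κ-scattered, then P is weakly κ-scattered and has no antichain of size λ. -/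
open Cardinal Set

universe u

section Stmt10Aux
open Ordinal
namespace Stmt10D
theorem bool_cases (b : Bool) : b = false ∨ b = true := by cases b <;> simp

section lex
variable {α : Type u} [LinearOrder α]

def lrel (f g : α → Bool) : Prop :=
  ∃ i, f i = false ∧ g i = true ∧ ∀ j, j < i → f j = g j


theorem lrel_irrefl (f : α → Bool) : ¬ lrel f f := by
  rintro ⟨i, h1, h2, -⟩; simp [h1] at h2

theorem lrel_trans {f g h : α → Bool} (h1 : lrel f g) (h2 : lrel g h) : lrel f h := by
  obtain ⟨i, fi, gi, ag1⟩ := h1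
  obtain ⟨j, gj, hj, ag2⟩ := h2
  rcases lt_trichotomy i j with hij | rfl | hji
  · exact ⟨i, fi, (ag2 i hij).symm.trans gi, fun b hb => ((ag1 b hb).trans (ag2 b (hb.trans hij)))⟩
  · exact ⟨i, fi, hj, fun b hb => (ag1 b hb).trans (ag2 b hb)⟩
  · exact ⟨j, (ag1 j hji).trans gj, hj, fun b hb => (ag1 b (hb.trans hji)).trans (ag2 b hb)⟩

theorem exists_leastDiff [WellFoundedLT α] {f g : α → Bool} (h : f ≠ g) :
    ∃ i, (f i ≠ g i ∧ ∀ j, j < i → f j = g j) := by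
  have hne : {i | f i ≠ g i}.Nonempty := by
    by_contra hc
    exact h (funext fun i => by_contra fun hi => hc ⟨i, hi⟩)
  refine ⟨(wellFounded_lt (α := α)).min _ hne, (wellFounded_lt (α := α)).min_mem _ hne,
    fun j hj => by_contra fun hne' => (wellFounded_lt (α := α)).not_lt_min _ hne' hj⟩

end lex

def Lset (κ : Cardinal.{u}) : Set (κ.ord.ToType → Bool) :=
  {f | ∃ i, f i = true ∧ ∀ j, i < j → f j = false}

variable {κ : Cardinal.{u}}

theorem exists_bound (hκ : κ.IsRegular) {ι : Type u} (f : ι → κ.ord.ToType) (hι : #ι < κ) :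
    ∃ δ : κ.ord.ToType, ∀ i, f i < δ := by
  haveI : IsWellOrder κ.ord.ToType (· < ·) := isWellOrder_lt
  have h1 : ∀ i, typein ((· < ·) : κ.ord.ToType → κ.ord.ToType → Prop) (f i) < κ.ord := by
    intro i
    have := typein_lt_type ((· < ·) : κ.ord.ToType → κ.ord.ToType → Prop) (f i)
    rwa [type_toType] at this
  have h2 := Cardinal.lsub_lt_ord_of_isRegular.{u,u} hκ hι h1
  refine ⟨enum ((· < ·) : κ.ord.ToType → κ.ord.ToType → Prop)
    ⟨Ordinal.lsub fun i => typein (· < ·) (f i), by rw [type_toType]; exact mem_Iio.mpr h2⟩, fun i => ?_⟩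
  rw [← typein_lt_typein ((· < ·) : κ.ord.ToType → κ.ord.ToType → Prop)]
  erw [typein_enum]
  exact Ordinal.lt_lsub _ i

theorem dense_lemma (hκ : κ.IsRegular) (S T : Set (κ.ord.ToType → Bool))
    (hS : S ⊆ Lset κ) (hT : T ⊆ Lset κ) (cS : #S < κ) (cT : #T < κ)
    (hST : ∀ s ∈ S, ∀ t ∈ T, lrel s t) :
    ∃ x ∈ Lset κ, (∀ s ∈ S, lrel s x) ∧ (∀ t ∈ T, lrel x t) := by
  classical
  haveI : NoMaxOrder κ.ord.ToType := Cardinal.noMaxOrder hκ.aleph0_le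
  letI : SuccOrder κ.ord.ToType := SuccOrder.ofLinearWellFoundedLT _
  -- last one positions
  have hloE : ∀ f ∈ Lset κ, ∃ i, f i = true ∧ ∀ j, i < j → f j = false := fun f hf => hf
  choose lo hlo1 hlo2 using hloE
  -- the bound δ
  have hcard : #(↥(S ∪ T)) < κ :=
    (Cardinal.mk_union_le S T).trans_lt (Cardinal.add_lt_of_lt hκ.aleph0_le cS cT)
  obtain ⟨δ, hδ0⟩ := exists_bound hκ
    (fun e : ↥(S ∪ T) => Order.succ (lo e.1 ((union_subset hS hT) e.2))) hcard
  have hδ : ∀ f (hf : f ∈ S ∪ T), Order.succ (lo f ((union_subset hS hT) hf)) < δ :=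
    fun f hf => hδ0 ⟨f, hf⟩
  have hδ' : ∀ f (hf : f ∈ S ∪ T), lo f ((union_subset hS hT) hf) < δ :=
    fun f hf => (Order.lt_succ _).trans (hδ f hf)
  -- the function M = infimum-approximant of T
  let M : κ.ord.ToType → Bool := WellFounded.fix wellFounded_lt
    (fun α (ih : ∀ β, β < α → Bool) =>
      if (∀ t ∈ T, (∀ β (hβ : β < α), t β = ih β hβ) → t α = true) then true else false)
  have hMtrue : ∀ α, M α = true ↔ ∀ t ∈ T, (∀ β, β < α → t β = M β) → t α = true := by
    intro α
    have h0 := WellFounded.fix_eq wellFounded_lt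
      (fun α (ih : ∀ β, β < α → Bool) =>
        if (∀ t ∈ T, (∀ β (hβ : β < α), t β = ih β hβ) → t α = true) then true else false) α
    have h1 : M α = if (∀ t ∈ T, (∀ β, β < α → t β = M β) → t α = true) then true
        else false := h0
    rw [h1]
    split_ifs with h
    · simpa using h
    · simp [h]
  -- fact A : M is below every element of T
  have factA : ∀ t ∈ T, t = M ∨ lrel M t := by
    intro t ht
    by_cases hEq : t = M
    · exact Or.inl hEq
    obtain ⟨i, hne, hag⟩ := exists_leastDiff (f := M) (g := t) (fun h => hEq h.symm)
    rcases bool_cases (M i) with hMi | hMi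
    · rcases bool_cases (t i) with hti | hti
      · exact absurd (hMi.trans hti.symm) hne
      · exact Or.inr ⟨i, hMi, hti, hag⟩
    · have := (hMtrue i).1 hMi t ht (fun β hβ => (hag β hβ).symm)
      exact absurd (hMi.trans this.symm) hne
  -- fact B : M is above every lower bound of T
  have factB : ∀ c : κ.ord.ToType → Bool, (∀ t ∈ T, c = t ∨ lrel c t) → c = M ∨ lrel c M := by
    intro c hc
    by_cases hEq : c = M
    · exact Or.inl hEq
    obtain ⟨i, hne, hag⟩ := exists_leastDiff hEq
    rcases bool_cases (c i) with hci | hci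
    · rcases bool_cases (M i) with hMi | hMi
      · exact absurd (hci.trans hMi.symm) hne
      · exact Or.inr ⟨i, hci, hMi, hag⟩
    · exfalso
      have hMi : M i = false := by
        rcases bool_cases (M i) with h | h
        · exact h
        · exact absurd (hci.trans h.symm) hne
      have hnot : ¬ ∀ t ∈ T, (∀ β, β < i → t β = M β) → t i = true := by
        intro h
        rw [(hMtrue i).2 h] at hMi
        exact Bool.noConfusion hMi
      push_neg at hnot
      obtain ⟨t, ht, hagt, hti0⟩ := hnot
      have hti : t i = false := by
        rcases bool_cases (t i) with h | h
        · exact h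
        · exact absurd h hti0
      rcases hc t ht with rfl | hlt
      · exact Bool.false_ne_true (hti.symm.trans hci)
      · obtain ⟨j, hcj, htj, hagj⟩ := hlt
        rcases lt_trichotomy j i with hj | rfl | hj
        · have h2 : c j = t j := (hag j hj).trans (hagt j hj).symm
          exact Bool.false_ne_true ((hcj.symm.trans h2).trans htj)
        · exact Bool.false_ne_true (hcj.symm.trans hci)
        · have h2 : c i = t i := hagj i hj
          exact Bool.false_ne_true ((hti.symm.trans h2.symm).trans hci)
  have factC : ∀ s ∈ S, s = M ∨ lrel s M :=
    fun s hs => factB s (fun t ht => Or.inr (hST s hs t ht))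
  by_cases hattain : ∃ t₀ ∈ T, M = t₀
  · -- Case 1 : the infimum of T is attained
    obtain ⟨t₀, ht₀, hMt₀⟩ := hattain
    have hL : t₀ ∈ Lset κ := hT ht₀
    have hmem : t₀ ∈ S ∪ T := mem_union_right _ ht₀
    set γ := lo t₀ hL with hγdef
    have hγ1 : t₀ γ = true := hlo1 t₀ hL
    have hγ2 : ∀ j, γ < j → t₀ j = false := hlo2 t₀ hL
    have hsγδ : Order.succ γ < δ := hδ t₀ hmem
    have hγδ : γ < δ := (Order.lt_succ γ).trans hsγδ
    set x : κ.ord.ToType → Bool :=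
      fun j => if j < γ then t₀ j else if γ < j ∧ j ≤ δ then true else false with hxdef
    have hxlow : ∀ j, j < γ → x j = t₀ j := fun j hj => if_pos hj
    have hxγ : x γ = false := by
      rw [hxdef]
      simp
    have hxmid : ∀ j, γ < j → j ≤ δ → x j = true := by
      intro j h1 h2
      rw [hxdef]
      simp only []
      rw [if_neg (asymm h1 : ¬ j < γ), if_pos ⟨h1, h2⟩]
    have hxhigh : ∀ j, δ < j → x j = false := by
      intro j h1
      rw [hxdef]
      simp only []
      rw [if_neg (asymm (hγδ.trans h1) : ¬ j < γ), if_neg]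
      rintro ⟨-, h2⟩
      exact absurd h1 (not_lt_of_ge h2)
    refine ⟨x, ⟨δ, hxmid δ hγδ le_rfl, hxhigh⟩, ?_, ?_⟩
    · -- every s ∈ S is below x
      intro s hs
      have hsL : s ∈ Lset κ := hS hs
      obtain ⟨β, hsβ, ht₀β, hagβ⟩ := hST s hs t₀ ht₀
      have hβγ : β ≤ γ := by
        by_contra h
        rw [hγ2 β (lt_of_not_ge h)] at ht₀β
        exact Bool.noConfusion ht₀β
      rcases lt_or_eq_of_le hβγ with h | h
      · exact ⟨β, hsβ, (hxlow β h).trans ht₀β, fun j hj =>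
          (hagβ j hj).trans (hxlow j (hj.trans h)).symm⟩
      · -- β = γ : s agrees with t₀ strictly below γ and s γ = false
        rw [h] at hsβ hagβ
        have hsmem : s ∈ S ∪ T := mem_union_left _ hs
        have hsβδ : Order.succ (lo s hsL) < δ := hδ s hsmem
        set ζ := Order.succ (max γ (lo s hsL)) with hζdef
        have hζγ : γ < ζ := (le_max_left _ _).trans_lt (Order.lt_succ _)
        have hζβ₀ : lo s hsL < ζ := (le_max_right _ _).trans_lt (Order.lt_succ _)
        have hζδ : ζ < δ := by
          rcases max_choice γ (lo s hsL) with h2 | h2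
          · rw [hζdef, h2]; exact hsγδ
          · rw [hζdef, h2]; exact hsβδ
        have hsζ : s ζ = false := hlo2 s hsL ζ hζβ₀
        have hWne : {j | γ < j ∧ j ≤ δ ∧ s j = false}.Nonempty := ⟨ζ, hζγ, hζδ.le, hsζ⟩
        set j₀ := (wellFounded_lt).min _ hWne with hj₀def
        obtain ⟨hj₀γ, hj₀δ, hsj₀⟩ :
            γ < j₀ ∧ j₀ ≤ δ ∧ s j₀ = false := (wellFounded_lt).min_mem _ hWne
        refine ⟨j₀, hsj₀, hxmid j₀ hj₀γ hj₀δ, ?_⟩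
        intro j hj
        rcases lt_trichotomy j γ with h1 | h1 | h1
        · exact (hagβ j h1).trans (hxlow j h1).symm
        · rw [h1, hsβ, hxγ]
        · have hjδ : j ≤ δ := hj.le.trans hj₀δ
          have hsj : s j = true := by
            rcases bool_cases (s j) with h2 | h2
            · exact absurd hj (wellFounded_lt.not_lt_min _ (show j ∈ {j | γ < j ∧ j ≤ δ ∧ s j = false} from ⟨h1, hjδ, h2⟩))
            · exact h2
          rw [hsj, hxmid j h1 hjδ]
    · -- x is below every t ∈ T
      intro t ht
      rcases factA t ht with rfl | hMt
      · -- t = M = t₀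
        rw [hMt₀]
        exact ⟨γ, hxγ, hγ1, fun j hj => hxlow j hj⟩
      · rw [hMt₀] at hMt
        obtain ⟨α, hα1, hα2, hagα⟩ := hMt
        rcases lt_trichotomy α γ with h | h | h
        · exact ⟨α, (hxlow α h).trans hα1, hα2, fun j hj =>
            (hxlow j (hj.trans h)).trans (hagα j hj)⟩
        · rw [h] at hα1
          rw [hγ1] at hα1
          exact Bool.noConfusion hα1
        · have htγ : t γ = true := (hagα γ h).symm.trans hγ1
          exact ⟨γ, hxγ, htγ, fun j hj => (hxlow j hj).trans (hagα j (hj.trans h))⟩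
  · -- Case 2 : the infimum of T is not attained
    push_neg at hattain
    set x : κ.ord.ToType → Bool :=
      fun j => if j < δ then M j else if j = δ then true else false with hxdef
    have hxlow : ∀ j, j < δ → x j = M j := fun j hj => if_pos hj
    have hxδ : x δ = true := by
      rw [hxdef]
      simp
    have hxhigh : ∀ j, δ < j → x j = false := by
      intro j h1
      rw [hxdef]
      simp only []
      rw [if_neg (asymm h1 : ¬ j < δ), if_neg (ne_of_gt h1)]
    refine ⟨x, ⟨δ, hxδ, hxhigh⟩, ?_, ?_⟩
    · intro s hs
      have hsL : s ∈ Lset κ := hS hs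
      have hsδ : lo s hsL < δ := hδ' s (mem_union_left _ hs)
      have hsδ' : s δ = false := hlo2 s hsL δ hsδ
      rcases factC s hs with rfl | hsM
      · exact ⟨δ, hsδ', hxδ, fun j hj => (hxlow j hj).symm⟩
      · obtain ⟨α, hα1, hα2, hagα⟩ := hsM
        rcases lt_or_ge α δ with h | h
        · exact ⟨α, hα1, (hxlow α h).trans hα2, fun j hj =>
            (hagα j hj).trans (hxlow j (hj.trans h)).symm⟩
        · exact ⟨δ, hsδ', hxδ, fun j hj =>
            (hagα j (hj.trans_le h)).trans (hxlow j hj).symm⟩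
    · intro t ht
      rcases factA t ht with rfl | hMt
      · exact absurd rfl (hattain M ht)
      · obtain ⟨α, hα1, hα2, hagα⟩ := hMt
        have htL : t ∈ Lset κ := hT ht
        have htδ : lo t htL < δ := hδ' t (mem_union_right _ ht)
        have hαδ : α < δ := by
          rcases lt_or_ge (lo t htL) α with h | h
          · rw [hlo2 t htL α h] at hα2
            exact Bool.noConfusion hα2
          · exact lt_of_le_of_lt h htδ
        exact ⟨α, (hxlow α hαδ).trans hα1, hα2, fun j hj =>
          (hxlow j (hj.trans hαδ)).trans (hagα j hj)⟩

theorem mk_Lset_le (hκ : κ.IsRegular) : #(Lset κ) ≤ κ ^< κ := by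
  have h2κ : (2 : Cardinal) ≤ κ := by
    have := (Cardinal.nat_lt_aleph0 2).le.trans hκ.aleph0_le
    exact_mod_cast this
  have hkl : κ ≤ κ ^< κ := by
    have := Cardinal.le_powerlt (c := 1) κ (Cardinal.one_lt_aleph0.trans_le hκ.aleph0_le)
    rwa [Cardinal.power_one] at this
  have hlinf : ℵ₀ ≤ κ ^< κ := hκ.aleph0_le.trans hkl
  set I := κ.ord.ToType
  have hsub : Lset κ ⊆ ⋃ i : I, {f : I → Bool | ∀ j, i < j → f j = false} := by
    rintro f ⟨i, -, hi⟩
    exact mem_iUnion.2 ⟨i, hi⟩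
  have hbnd : ∀ i : I, #{f : I → Bool | ∀ j, i < j → f j = false} ≤ κ ^< κ := by
    intro i
    have hinj : Function.Injective
        (fun f : {f : I → Bool | ∀ j, i < j → f j = false} => fun j : Iic i => f.1 j.1) := by
      intro f g h
      apply Subtype.ext
      funext j
      rcases le_or_gt j i with hj | hj
      · exact congrFun h ⟨j, hj⟩
      · exact (f.2 j hj).trans (g.2 j hj).symm
    have h1 : #{f : I → Bool | ∀ j, i < j → f j = false} ≤ #(Iic i → Bool) :=
      Cardinal.mk_le_of_injective hinj
    have h2 : #(Iic i → Bool) = 2 ^ #(Iic i) := by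
      simp [Cardinal.mk_arrow]
    have h3 : #(Iic i) < κ := by
      have hio : #(Iio i) < κ := Cardinal.mk_Iio_ord_toType i
      have : #(Iic i) ≤ #(Iio i) + 1 := by
        rw [← Set.Iio_insert]; exact Cardinal.mk_insert_le
      exact this.trans_lt (Cardinal.add_lt_of_lt hκ.aleph0_le hio
        (Cardinal.one_lt_aleph0.trans_le hκ.aleph0_le))
    calc #{f : I → Bool | ∀ j, i < j → f j = false} ≤ 2 ^ #(Iic i) := h2 ▸ h1
      _ ≤ κ ^ #(Iic i) := Cardinal.power_le_power_right h2κ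
      _ ≤ κ ^< κ := Cardinal.le_powerlt κ h3
  calc #(Lset κ) ≤ #(⋃ i : I, {f : I → Bool | ∀ j, i < j → f j = false}) := Cardinal.mk_le_mk_of_subset hsub
    _ ≤ #I * ⨆ i : I, #{f : I → Bool | ∀ j, i < j → f j = false} := Cardinal.mk_iUnion_le _
    _ ≤ κ * (κ ^< κ) := by
        rw [Cardinal.mk_ord_toType]
        exact mul_le_mul_right (ciSup_le' hbnd) κ
    _ = κ ^< κ := by
        rw [Cardinal.mul_eq_max hκ.aleph0_le hlinf]
        exact max_eq_right hkl


end Stmt10D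

end Stmt10Aux

open Stmt10D in
/-- If every augmentation of P is weakly κ-scattered, then P is weakly κ-scattered
and has no antichain of size λ = κ^{<κ}. -/
theorem stmt_10 {P : Type u} [inst : PartialOrder P] (κ : Cardinal.{u}) (hκ : κ.IsRegular)
    (haug : ∀ inst' : PartialOrder P, (∀ a b : P, a ≤ b → inst'.le a b) →
      @WeaklyScattered κ P inst'.toPreorder) :
    WeaklyScattered κ P ∧ ∀ A : Set P, IsAntichain (· ≤ ·) A → #A ≠ κ ^< κ := by
  constructor
  · exact haug inst (fun a b h => h)
  · intro A hA hcard
    have hLle : #(Lset κ) ≤ #A := le_of_le_of_eq (mk_Lset_le hκ) hcard.symm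
    obtain ⟨e⟩ : Nonempty (↥(Lset κ) ↪ ↥A) := Cardinal.le_def _ _ |>.1 hLle
    have hkey : ∀ u v : ↥(Lset κ), ((e u : ↥A) : P) ≤ ((e v : ↥A) : P) → u = v := by
      intro u v huv
      by_cases h : ((e u : ↥A) : P) = ((e v : ↥A) : P)
      · exact e.injective (Subtype.ext h)
      · exact absurd huv (hA (e u).2 (e v).2 h)
    let le' : P → P → Prop := fun x y => x ≤ y ∨
      ∃ u v : ↥(Lset κ), lrel u.1 v.1 ∧ x ≤ ((e u : ↥A) : P) ∧ ((e v : ↥A) : P) ≤ y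
    have trans' : ∀ a b c, le' a b → le' b c → le' a c := by
      rintro a b c (hab | ⟨u, v, huv, h1, h2⟩) (hbc | ⟨u', v', huv', h1', h2'⟩)
      · exact Or.inl (hab.trans hbc)
      · exact Or.inr ⟨u', v', huv', hab.trans h1', h2'⟩
      · exact Or.inr ⟨u, v, huv, h1, h2.trans hbc⟩
      · have hvv : v = u' := hkey v u' (h2.trans h1')
        exact Or.inr ⟨u, v', lrel_trans huv (by rw [hvv]; exact huv'), h1, h2'⟩
    have antisymm' : ∀ a b, le' a b → le' b a → a = b := by
      rintro a b (hab | ⟨u, v, huv, h1, h2⟩) (hba | ⟨u', v', huv', h1', h2'⟩)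
      · exact le_antisymm hab hba
      · have h3 : v' = u' := hkey v' u' (h2'.trans (hab.trans h1'))
        exact absurd huv' (by rw [← h3]; exact lrel_irrefl _)
      · have h3 : v = u := hkey v u (h2.trans (hba.trans h1))
        exact absurd huv (by rw [← h3]; exact lrel_irrefl _)
      · have hvu' : v = u' := hkey v u' (h2.trans h1')
        have hv'u : v' = u := hkey v' u (h2'.trans h1)
        have huv'' : lrel v.1 u.1 := by rw [hvu', ← hv'u]; exact huv'
        exact absurd (lrel_trans huv huv'') (lrel_irrefl _)
    have hle' : ∀ u v : ↥(Lset κ),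
        le' ((e u : ↥A) : P) ((e v : ↥A) : P) ↔ (u = v ∨ lrel u.1 v.1) := by
      intro u v
      constructor
      · rintro (h | ⟨u', v', huv', h1', h2'⟩)
        · exact Or.inl (hkey u v h)
        · have h3 : u = u' := hkey u u' h1'
          have h4 : v' = v := hkey v' v h2'
          exact Or.inr (by rw [h3, ← h4]; exact huv')
      · rintro (rfl | h)
        · exact Or.inl le_rfl
        · exact Or.inr ⟨u, v, h, le_rfl, le_rfl⟩
    have hlt' : ∀ u v : ↥(Lset κ),
        (le' ((e u : ↥A) : P) ((e v : ↥A) : P) ∧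
          ¬ le' ((e v : ↥A) : P) ((e u : ↥A) : P)) ↔ lrel u.1 v.1 := by
      intro u v
      constructor
      · rintro ⟨h1, h2⟩
        rcases (hle' u v).1 h1 with rfl | h
        · exact absurd ((hle' u u).2 (Or.inl rfl)) h2
        · exact h
      · intro h
        refine ⟨(hle' u v).2 (Or.inr h), fun h2 => ?_⟩
        rcases (hle' v u).1 h2 with rfl | h3
        · exact lrel_irrefl _ h
        · exact lrel_irrefl _ (lrel_trans h h3)
    let inst' : PartialOrder P :=
      { le := le'
        lt := fun a b => le' a b ∧ ¬ le' b a
        le_refl := fun a => Or.inl le_rfl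
        le_trans := trans'
        lt_iff_le_not_ge := fun _ _ => Iff.rfl
        le_antisymm := antisymm' }
    have hws := haug inst' (fun _ _ h => h)
    -- the image of our dense linear order inside A
    apply hws (range fun u : ↥(Lset κ) => ((e u : ↥A) : P))
    -- transfer lemma for the order on the image
    intro S T hcS hcT hlt
    have hmem' : ∀ a : ↥(range fun u : ↥(Lset κ) => ((e u : ↥A) : P)),
        ∃ u : ↥(Lset κ), ((e u : ↥A) : P) = a.1 := fun a => a.2
    choose g hg using hmem'
    set S₀ : Set (κ.ord.ToType → Bool) := (fun a => (g a).1) '' S with hS₀def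
    set T₀ : Set (κ.ord.ToType → Bool) := (fun a => (g a).1) '' T with hT₀def
    have hS₀ : S₀ ⊆ Lset κ := by rintro _ ⟨a, -, rfl⟩; exact (g a).2
    have hT₀ : T₀ ⊆ Lset κ := by rintro _ ⟨a, -, rfl⟩; exact (g a).2
    have hcS₀ : #S₀ < κ := Cardinal.mk_image_le.trans_lt hcS
    have hcT₀ : #T₀ < κ := Cardinal.mk_image_le.trans_lt hcT
    have hST₀ : ∀ s ∈ S₀, ∀ t ∈ T₀, lrel s t := by
      rintro _ ⟨a, haS, rfl⟩ _ ⟨b, hbT, rfl⟩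
      have hab := hlt a haS b hbT
      have h1 : le' a.1 b.1 := (le_of_lt hab : a ≤ b)
      have h2 : ¬ le' b.1 a.1 := (not_le_of_gt hab : ¬ b ≤ a)
      rw [← hg a, ← hg b] at h1 h2
      exact (hlt' (g a) (g b)).1 ⟨h1, h2⟩
    obtain ⟨x, hxL, hxS, hxT⟩ := dense_lemma hκ S₀ T₀ hS₀ hT₀ hcS₀ hcT₀ hST₀
    refine ⟨⟨((e ⟨x, hxL⟩ : ↥A) : P), mem_range_self _⟩, fun a haS => ?_, fun b hbT => ?_⟩
    · have hl : lrel (g a).1 x := hxS _ ⟨a, haS, rfl⟩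
      have h12 := (hlt' (g a) ⟨x, hxL⟩).2 hl
      rw [hg a] at h12
      exact lt_iff_le_not_ge.mpr h12
    · have hl : lrel x (g b).1 := hxT _ ⟨b, hbT, rfl⟩
      have h12 := (hlt' ⟨x, hxL⟩ (g b)).2 hl
      rw [hg b] at h12
      exact lt_iff_le_not_ge.mpr h12
end

section
/- Let I be a weakly κ-scattered partial order and let (P_i)_{i ∈ I} be a family of weakly κ-scattered partial orders. Then the lexicographic sum of the P_i along I is weakly κ-scattered. -/
open Cardinal Set

universe u

lemma stronglyDense_subtype_iff {κ : Cardinal.{u}} {P : Type u} [Preorder P] {A : Set P} :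
    StronglyDense κ ↥A ↔ ∀ S T : Set P, S ⊆ A → T ⊆ A → #S < κ → #T < κ →
      (∀ s ∈ S, ∀ t ∈ T, s < t) →
      ∃ x ∈ A, (∀ s ∈ S, s < x) ∧ (∀ t ∈ T, x < t) := by
  constructor
  · intro h S T hSA hTA hS hT hST
    obtain ⟨x, hx1, hx2⟩ := h (Subtype.val ⁻¹' S) (Subtype.val ⁻¹' T)
      ((Cardinal.mk_preimage_of_injective _ _ Subtype.coe_injective).trans_lt hS)
      ((Cardinal.mk_preimage_of_injective _ _ Subtype.coe_injective).trans_lt hT)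
      (fun s hs t ht => Subtype.coe_lt_coe.mp (hST s hs t ht))
    exact ⟨x, x.2, fun s hs => hx1 ⟨s, hSA hs⟩ hs, fun t ht => hx2 ⟨t, hTA ht⟩ ht⟩
  · intro h S T hS hT hST
    obtain ⟨x, hxA, hx1, hx2⟩ := h (Subtype.val '' S) (Subtype.val '' T)
      (by rintro _ ⟨s, _, rfl⟩; exact s.2) (by rintro _ ⟨t, _, rfl⟩; exact t.2)
      (Cardinal.mk_image_le.trans_lt hS) (Cardinal.mk_image_le.trans_lt hT)
      (by rintro _ ⟨s, hs, rfl⟩ _ ⟨t, ht, rfl⟩; exact Subtype.coe_lt_coe.mpr (hST s hs t ht))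
    exact ⟨⟨x, hxA⟩, fun s hs => hx1 s (mem_image_of_mem _ hs),
      fun t ht => hx2 t (mem_image_of_mem _ ht)⟩

lemma lex_fiber_lt {I : Type u} [PartialOrder I] {Q : I → Type u} [∀ i, PartialOrder (Q i)]
    {i : I} {a b : Q i} (h : a < b) : (toLex ⟨i, a⟩ : Σₗ i, Q i) < toLex ⟨i, b⟩ :=
  Sigma.Lex.lt_def.mpr (Or.inr ⟨rfl, h⟩)

lemma lex_left_lt {I : Type u} [PartialOrder I] {Q : I → Type u} [∀ i, PartialOrder (Q i)]
    {i j : I} {a : Q i} {b : Q j} (h : i < j) : (toLex ⟨i, a⟩ : Σₗ i, Q i) < toLex ⟨j, b⟩ :=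
  Sigma.Lex.lt_def.mpr (Or.inl h)

lemma lex_between {I : Type u} [PartialOrder I] {Q : I → Type u} [∀ i, PartialOrder (Q i)]
    {i : I} {a b : Q i} {x : Σₗ i, Q i}
    (h1 : toLex ⟨i, a⟩ < x) (h2 : x < toLex ⟨i, b⟩) :
    ∃ y : Q i, x = toLex ⟨i, y⟩ ∧ a < y ∧ y < b := by
  rw [Sigma.Lex.lt_def] at h1 h2
  obtain (h1 | ⟨h1, hay⟩) := h1 <;> obtain (h2 | ⟨h2, hyb⟩) := h2
  · exact absurd (h1.trans h2) (lt_irrefl i)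
  · exact absurd (h1.trans_eq h2) (lt_irrefl i)
  · exact absurd (h1.trans_lt h2) (lt_irrefl i)
  · cases h2
    exact ⟨(ofLex x).2, rfl, hay, hyb⟩

lemma lex_fiber_extract {I : Type u} [PartialOrder I] {Q : I → Type u}
    [∀ i, PartialOrder (Q i)] {i j : I} {s : Q i} {t : Q j}
    (h : (toLex ⟨i, s⟩ : Σₗ i, Q i) < toLex ⟨j, t⟩) (hij : j = i) :
    ∃ s' : Q j, s' < t ∧ (toLex ⟨j, s'⟩ : Σₗ i, Q i) = toLex ⟨i, s⟩ := by
  subst hij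
  rw [Sigma.Lex.lt_def] at h
  obtain (h | ⟨h2, h3⟩) := h
  · exact absurd h (lt_irrefl j)
  · exact ⟨s, h3, rfl⟩

/-- The lexicographic sum of weakly κ-scattered partial orders along a weakly
κ-scattered partial order is weakly κ-scattered. -/
theorem stmt_13 {I : Type u} [PartialOrder I] (Q : I → Type u) [∀ i, PartialOrder (Q i)]
    (κ : Cardinal.{u}) (hκ : κ.IsRegular)
    (hI : WeaklyScattered κ I) (hQ : ∀ i, WeaklyScattered κ (Q i)) :
    WeaklyScattered κ (Σₗ i, Q i) := by
  intro A hA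
  rw [stronglyDense_subtype_iff] at hA
  have hone : (1 : Cardinal.{u}) < κ := one_lt_aleph0.trans_le hκ.aleph0_le
  by_cases hfib : ∃ i, ∃ s t : Q i, s < t ∧ toLex ⟨i, s⟩ ∈ A ∧ toLex ⟨i, t⟩ ∈ A
  · -- Case 1: some fiber has two comparable elements; build a strongly dense subset of Q i
    obtain ⟨i, s, t, hst, hsA, htA⟩ := hfib
    refine hQ i {x : Q i | toLex ⟨i, x⟩ ∈ A ∧ s < x ∧ x < t} ?_
    rw [stronglyDense_subtype_iff]
    intro S T hSC hTC hS hT hST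
    obtain ⟨x, hxA, hx1, hx2⟩ := hA
      (insert (toLex ⟨i, s⟩) ((fun y : Q i => toLex ⟨i, y⟩) '' S))
      (insert (toLex ⟨i, t⟩) ((fun y : Q i => toLex ⟨i, y⟩) '' T))
      (by rintro _ (rfl | ⟨y, hy, rfl⟩); exacts [hsA, (hSC hy).1])
      (by rintro _ (rfl | ⟨y, hy, rfl⟩); exacts [htA, (hTC hy).1])
      ((Cardinal.mk_insert_le).trans_lt
        (Cardinal.add_lt_of_lt hκ.aleph0_le (Cardinal.mk_image_le.trans_lt hS) hone))
      ((Cardinal.mk_insert_le).trans_lt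
        (Cardinal.add_lt_of_lt hκ.aleph0_le (Cardinal.mk_image_le.trans_lt hT) hone))
      (by
        rintro _ (rfl | ⟨a, ha, rfl⟩) _ (rfl | ⟨b, hb, rfl⟩)
        · exact lex_fiber_lt hst
        · exact lex_fiber_lt (hTC hb).2.1
        · exact lex_fiber_lt (hSC ha).2.2
        · exact lex_fiber_lt (hST a ha b hb))
    obtain ⟨y, rfl, hsy, hyt⟩ := lex_between (hx1 _ (mem_insert _ _)) (hx2 _ (mem_insert _ _))
    refine ⟨y, ⟨hxA, hsy, hyt⟩, fun a ha => ?_, fun b hb => ?_⟩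
    · have := hx1 _ (mem_insert_of_mem _ (mem_image_of_mem _ ha))
      rw [Sigma.Lex.lt_def] at this
      obtain (h | ⟨h, h2⟩) := this
      · exact absurd h (lt_irrefl i)
      · cases h; exact h2
    · have := hx2 _ (mem_insert_of_mem _ (mem_image_of_mem _ hb))
      rw [Sigma.Lex.lt_def] at this
      obtain (h | ⟨h, h2⟩) := this
      · exact absurd h (lt_irrefl i)
      · cases h; exact h2
  · -- Case 2: fibers are antichains; the index set of A is strongly dense
    push_neg at hfib
    refine hI {i : I | ∃ x : Q i, toLex ⟨i, x⟩ ∈ A} ?_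
    rw [stronglyDense_subtype_iff]
    intro S' T' hS'J hT'J hS' hT' hST'
    classical
    set J : Set I := {i : I | ∃ x : Q i, toLex ⟨i, x⟩ ∈ A} with hJ
    let g : ↥J → Σₗ i, Q i := fun i => toLex ⟨i.1, i.2.choose⟩
    have hgA : ∀ i, g i ∈ A := fun i => i.2.choose_spec
    have hg1 : ∀ i, (ofLex (g i)).1 = i.1 := fun i => rfl
    obtain ⟨x, hxA, hx1, hx2⟩ := hA
      (g '' (Subtype.val ⁻¹' S')) (g '' (Subtype.val ⁻¹' T'))
      (by rintro _ ⟨j, hj, rfl⟩; exact hgA j)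
      (by rintro _ ⟨j, hj, rfl⟩; exact hgA j)
      (Cardinal.mk_image_le.trans_lt
        ((Cardinal.mk_preimage_of_injective _ _ Subtype.coe_injective).trans_lt hS'))
      (Cardinal.mk_image_le.trans_lt
        ((Cardinal.mk_preimage_of_injective _ _ Subtype.coe_injective).trans_lt hT'))
      (by
        rintro _ ⟨a, ha, rfl⟩ _ ⟨b, hb, rfl⟩
        exact lex_left_lt (hST' a ha b hb))
    refine ⟨(ofLex x).1, ⟨(ofLex x).2, hxA⟩, ?_, ?_⟩
    · intro j hj
      have hax := hx1 _ (mem_image_of_mem g (show (⟨j, hS'J hj⟩ : ↥J) ∈ _ from hj))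
      have hax' := hax
      rw [Sigma.Lex.lt_def] at hax
      obtain (h | ⟨h, h2⟩) := hax
      · exact h
      · exfalso
        obtain ⟨s', hlt, heq⟩ := lex_fiber_extract
          (show (toLex ⟨j, (hS'J hj).choose⟩ : Σₗ i, Q i) <
            toLex ⟨(ofLex x).1, (ofLex x).2⟩ from hax') h.symm
        exact hfib _ _ _ hlt (by rw [heq]; exact hgA ⟨j, hS'J hj⟩) hxA
    · intro j hj
      have hax := hx2 _ (mem_image_of_mem g (show (⟨j, hT'J hj⟩ : ↥J) ∈ _ from hj))
      have hax' := hax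
      rw [Sigma.Lex.lt_def] at hax
      obtain (h | ⟨h, h2⟩) := hax
      · exact h
      · exfalso
        obtain ⟨s', hlt, heq⟩ := lex_fiber_extract
          (show (toLex ⟨(ofLex x).1, (ofLex x).2⟩ : Σₗ i, Q i) <
            toLex ⟨j, (hT'J hj).choose⟩ from hax') h.symm
        exact hfib _ _ _ hlt (by rw [heq]; exact hxA) (hgA ⟨j, hT'J hj⟩)
end

section
/- Let I be a strongly κ-scattered linear order and let (P_i)_{i ∈ I} be a family of strongly κ-scattered linear orders. Then the lexicographic sum of the P_i along I is strongly κ-scattered. -/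
open Cardinal Set

universe u

/-- The lexicographic sum of strongly κ-scattered linear orders along a strongly
κ-scattered linear order is strongly κ-scattered. -/
theorem stmt_14 {I : Type u} [LinearOrder I] (Q : I → Type u) [∀ i, LinearOrder (Q i)]
    (κ : Cardinal.{u}) (hκ : κ.IsRegular)
    (hI : StronglyScattered κ I) (hQ : ∀ i, StronglyScattered κ (Q i)) :
    StronglyScattered κ (Σₗ i, Q i) := by
  intro A hA
  obtain ⟨hA2, hAint⟩ := hA
  by_cases hcase : ∃ s t : ↥A, s < t ∧ (s : Σₗ i, Q i).1 = (t : Σₗ i, Q i).1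
  · -- Case 1: two comparable elements of A in the same fiber
    obtain ⟨s, t, hst, hfib⟩ := hcase
    set i := (s : Σₗ i, Q i).1 with hi
    set B : Set (Q i) := {x : Q i | (⟨i, x⟩ : Σₗ i, Q i) ∈ A} with hB
    apply hQ i B
    constructor
    · -- 2 ≤ #B
      obtain ⟨⟨si, sx⟩, hsA⟩ := s
      obtain ⟨⟨ti, tx⟩, htA⟩ := t
      change (_ : Σₗ i, Q i) < _ at hst
      dsimp only at hfib hi
      subst hfib
      rw [Sigma.Lex.lt_def] at hst
      rcases hst with h | ⟨h, h2⟩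
      · exact absurd h (lt_irrefl _)
      · rw [Cardinal.two_le_iff]
        refine ⟨⟨sx, hsA⟩, ⟨tx, htA⟩, fun hcontra => ?_⟩
        rw [Subtype.mk_eq_mk] at hcontra
        exact h2.ne hcontra
    · -- intervals in B have size ≥ κ
      intro u v huv
      have hu : (⟨i, (u : Q i)⟩ : Σₗ i, Q i) ∈ A := u.2
      have hv : (⟨i, (v : Q i)⟩ : Σₗ i, Q i) ∈ A := v.2
      set su : ↥A := ⟨⟨i, (u : Q i)⟩, hu⟩ with hsu
      set tv : ↥A := ⟨⟨i, (v : Q i)⟩, hv⟩ with htv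
      have hsutv : su < tv := by
        rw [hsu, htv]; change (_ : Σₗ i, Q i) < _; rw [Sigma.Lex.lt_def]
        exact Or.inr ⟨rfl, huv⟩
      have hbig := hAint su tv hsutv
      refine le_trans hbig (Cardinal.mk_le_of_surjective
        (f := fun y : {y : ↥B | u < y ∧ y < v} =>
          ⟨⟨⟨i, ((y : ↥B) : Q i)⟩, (y : ↥B).2⟩, by
              rw [hsu]; change (_ : Σₗ i, Q i) < _; rw [Sigma.Lex.lt_def]
              exact Or.inr ⟨rfl, y.2.1⟩, by
              rw [htv]; change (_ : Σₗ i, Q i) < _; rw [Sigma.Lex.lt_def]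
              exact Or.inr ⟨rfl, y.2.2⟩⟩) ?_)
      rintro ⟨⟨⟨xi, xv⟩, hxA⟩, hx1, hx2⟩
      have hxi : xi = i := by
        rw [hsu] at hx1; change (_ : Σₗ i, Q i) < _ at hx1; rw [Sigma.Lex.lt_def] at hx1
        rw [htv] at hx2; change (_ : Σₗ i, Q i) < _ at hx2; rw [Sigma.Lex.lt_def] at hx2
        rcases hx2 with h | ⟨h, _⟩
        · rcases hx1 with h' | ⟨h', _⟩
          · exact absurd (h'.trans h) (lt_irrefl _)
          · exact h'.symm
        · exact h
      subst hxi
      have hxB : xv ∈ B := hxA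
      have h1 : u < (⟨xv, hxB⟩ : ↥B) := by
        rw [hsu] at hx1; change (_ : Σₗ i, Q i) < _ at hx1; rw [Sigma.Lex.lt_def] at hx1
        rcases hx1 with h | ⟨h, h2⟩
        · exact absurd h (lt_irrefl _)
        · exact h2
      have h2 : (⟨xv, hxB⟩ : ↥B) < v := by
        rw [htv] at hx2; change (_ : Σₗ i, Q i) < _ at hx2; rw [Sigma.Lex.lt_def] at hx2
        rcases hx2 with h | ⟨h, h2⟩
        · exact absurd h (lt_irrefl _)
        · exact h2
      exact ⟨⟨⟨xv, hxB⟩, h1, h2⟩, rfl⟩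
  · -- Case 2: projection to I is strictly increasing on A
    push_neg at hcase
    have hmono : ∀ s t : ↥A, s < t → (s : Σₗ i, Q i).1 < (t : Σₗ i, Q i).1 := by
      intro s t hst
      have h : (s : Σₗ i, Q i) < (t : Σₗ i, Q i) := hst
      rw [Sigma.Lex.lt_def] at h
      rcases h with h | ⟨h, _⟩
      · exact h
      · exact absurd h (hcase s t hst)
    set π : ↥A → I := fun x => (x : Σₗ i, Q i).1 with hπ
    set B : Set I := Set.range π with hB
    apply hI B
    constructor
    · -- 2 ≤ #B
      rw [Cardinal.two_le_iff] at hA2 ⊢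
      obtain ⟨a, b, hab⟩ := hA2
      rcases lt_trichotomy a b with h | h | h
      · exact ⟨⟨π a, Set.mem_range_self a⟩, ⟨π b, Set.mem_range_self b⟩,
          fun hc => (hmono a b h).ne (congrArg Subtype.val hc)⟩
      · exact absurd h hab
      · exact ⟨⟨π b, Set.mem_range_self b⟩, ⟨π a, Set.mem_range_self a⟩,
          fun hc => (hmono b a h).ne (congrArg Subtype.val hc)⟩
    · -- intervals in B have size ≥ κ
      rintro ⟨bi, s, hs⟩ ⟨bj, t, ht⟩ hij
      change (_ : I) < _ at hij
      have hst : s < t := by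
        have h1 : (s : Σₗ i, Q i) < (t : Σₗ i, Q i) := by
          rw [Sigma.Lex.lt_def]
          refine Or.inl ?_
          rw [show (s : Σₗ i, Q i).1 = π s from rfl, show (t : Σₗ i, Q i).1 = π t from rfl,
            hs, ht]
          exact hij
        exact h1
      have hbig := hAint s t hst
      refine le_trans hbig (Cardinal.mk_le_of_injective
        (f := fun x : {x : ↥A | s < x ∧ x < t} =>
          ⟨⟨π (x : ↥A), Set.mem_range_self _⟩, by
              change bi < π (x : ↥A); rw [← hs]
              exact hmono s x x.2.1, by
              change π (x : ↥A) < bj; rw [← ht]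
              exact hmono x t x.2.2⟩) ?_)
      rintro ⟨x, hx⟩ ⟨y, hy⟩ heq
      simp only [Subtype.mk_eq_mk] at heq
      rcases lt_trichotomy x y with h | h | h
      · exact absurd heq (hmono x y h).ne
      · exact Subtype.ext h
      · exact absurd heq.symm (hmono y x h).ne
end

section
/- Let Q be a linear order, and define a ≡ b iff the closed interval between a and b, with the induced order, lies in a class K of linear orders that contains all orders of size < κ and is closed under suborders and lexicographic sums along well-orders of length < |Q|⁺ and their inverses. Then ≡ is an equivalence relation, and each equivalence class, with the induced order, lies in K; moreover if a < b are inequivalent then every element equivalent to a is below every element equivalent to b. -/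
open Cardinal Set

universe u

private lemma aux_up {Q : Type u} [LinearOrder Q] (K : Set Q → Prop)
    (hsub : ∀ A B : Set Q, A ⊆ B → K B → K A)
    (hsum : ∀ (ι : Type u) (_ : LinearOrder ι), WellFoundedLT ι → #ι < Order.succ #Q →
      ∀ A : ι → Set Q, (∀ i j : ι, i < j → ∀ x ∈ A i, ∀ y ∈ A j, x < y) →
        (∀ i, K (A i)) → K (⋃ i, A i))
    (a : Q) (C : Set Q) (hC : ∀ b ∈ C, a ≤ b ∧ K (Set.Icc a b)) : K C := by
  obtain ⟨f⟩ : Nonempty ((#(↥C)).ord.ToType ≃ ↥C) := Cardinal.eq.mp (mk_ord_toType _)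
  set ι := (#(↥C)).ord.ToType with hι
  let A : ι → Set Q := fun i => {x | x ∈ C ∧ x ≤ (f i).1 ∧ ∀ j : ι, j < i → ¬ x ≤ (f j).1}
  have hun : C = ⋃ i, A i := by
    ext x
    simp only [mem_iUnion]
    constructor
    · intro hx
      obtain ⟨i, hiS, hmin⟩ := (wellFounded_lt (α := ι)).has_min {i : ι | x ≤ (f i).1}
        ⟨f.symm ⟨x, hx⟩, by simp⟩
      exact ⟨i, hx, hiS, fun j hj hxle => hmin j hxle hj⟩
    · rintro ⟨i, hi⟩
      exact hi.1
  rw [hun]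
  refine hsum ι inferInstance inferInstance ?_ A ?_ ?_
  · exact Order.lt_succ_iff.mpr (((mk_ord_toType _).trans_le (mk_subtype_le _)))
  · intro i j hij x hx y hy
    exact lt_of_le_of_lt hx.2.1 (not_le.mp (hy.2.2 i hij))
  · intro i
    refine hsub _ (Set.Icc a (f i).1) ?_ (hC (f i).1 (f i).2).2
    intro x hx
    exact ⟨(hC x hx.1).1, hx.2.1⟩

private lemma aux_down {Q : Type u} [LinearOrder Q] (K : Set Q → Prop)
    (hsub : ∀ A B : Set Q, A ⊆ B → K B → K A)
    (hsum' : ∀ (ι : Type u) (_ : LinearOrder ι), WellFoundedGT ι → #ι < Order.succ #Q →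
      ∀ A : ι → Set Q, (∀ i j : ι, i < j → ∀ x ∈ A i, ∀ y ∈ A j, x < y) →
        (∀ i, K (A i)) → K (⋃ i, A i))
    (a : Q) (C : Set Q) (hC : ∀ b ∈ C, b ≤ a ∧ K (Set.Icc b a)) : K C := by
  obtain ⟨f⟩ : Nonempty ((#(↥C)).ord.ToType ≃ ↥C) := Cardinal.eq.mp (mk_ord_toType _)
  set ι := (#(↥C)).ord.ToType with hι
  let A : ιᵒᵈ → Set Q := fun i =>
    {x | x ∈ C ∧ (f (OrderDual.ofDual i)).1 ≤ x ∧
      ∀ j : ι, j < OrderDual.ofDual i → ¬ (f j).1 ≤ x}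
  have hun : C = ⋃ i, A i := by
    ext x
    simp only [mem_iUnion]
    constructor
    · intro hx
      obtain ⟨i, hiS, hmin⟩ := (wellFounded_lt (α := ι)).has_min {i : ι | (f i).1 ≤ x}
        ⟨f.symm ⟨x, hx⟩, by simp⟩
      exact ⟨OrderDual.toDual i, hx, hiS, fun j hj hxle => hmin j hxle hj⟩
    · rintro ⟨i, hi⟩
      exact hi.1
  rw [hun]
  refine hsum' ιᵒᵈ inferInstance inferInstance ?_ A ?_ ?_
  · exact Order.lt_succ_iff.mpr (((mk_ord_toType _).trans_le (mk_subtype_le _)))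
  · intro i j hij x hx y hy
    have hji : OrderDual.ofDual j < OrderDual.ofDual i := hij
    exact lt_of_lt_of_le (not_le.mp (hx.2.2 _ hji)) hy.2.1
  · intro i
    refine hsub _ (Set.Icc (f (OrderDual.ofDual i)).1 a) ?_
      (hC (f (OrderDual.ofDual i)).1 (f (OrderDual.ofDual i)).2).2
    intro x hx
    exact ⟨hx.2.1, (hC x hx.1).1⟩

/-- `a ≡ b` iff the closed interval between them belongs to the class `K`
(of subsets of `Q`, regarded as suborders). -/
def IntervalEquiv {Q : Type u} [LinearOrder Q] (K : Set Q → Prop) (a b : Q) : Prop :=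
  K (Set.Icc (min a b) (max a b))

/-- Given a class K of suborders of a linear order Q that contains all orders of
size < κ and is closed under isomorphism, suborders, and lexicographic sums along
well-orders of length < |Q|⁺ and their inverses, the relation `IntervalEquiv K` is
an equivalence relation, each of its classes lies in K, and for `a < b`
inequivalent, the whole class of `a` lies below the whole class of `b`. -/
theorem stmt_15 {Q : Type u} [LinearOrder Q] (κ : Cardinal.{u}) (hκ : ℵ₀ ≤ κ)
    (K : Set Q → Prop)
    (hiso : ∀ A B : Set Q, Nonempty (↥A ≃o ↥B) → K A → K B)
    (hsmall : ∀ A : Set Q, #A < κ → K A)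
    (hsub : ∀ A B : Set Q, A ⊆ B → K B → K A)
    (hsum : ∀ (ι : Type u) (_ : LinearOrder ι), WellFoundedLT ι → #ι < Order.succ #Q →
      ∀ A : ι → Set Q, (∀ i j : ι, i < j → ∀ x ∈ A i, ∀ y ∈ A j, x < y) →
        (∀ i, K (A i)) → K (⋃ i, A i))
    (hsum' : ∀ (ι : Type u) (_ : LinearOrder ι), WellFoundedGT ι → #ι < Order.succ #Q →
      ∀ A : ι → Set Q, (∀ i j : ι, i < j → ∀ x ∈ A i, ∀ y ∈ A j, x < y) →
        (∀ i, K (A i)) → K (⋃ i, A i)) :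
    Equivalence (IntervalEquiv K) ∧
    (∀ a : Q, K {b : Q | IntervalEquiv K a b}) ∧
    (∀ a b c d : Q, a < b → ¬ IntervalEquiv K a b →
      IntervalEquiv K a c → IntervalEquiv K b d → c < d) := by
  classical
  have h2κ : (2 : Cardinal) < κ := lt_of_lt_of_le (nat_lt_aleph0 2) hκ
  -- union of two stacked pieces
  have hpair : ∀ A B : Set Q, K A → K B → (∀ x ∈ A, ∀ y ∈ B, x < y) → K (A ∪ B) := by
    intro A B hA hB hAB
    rcases lt_or_ge (#Q) 2 with hQ | hQ
    · exact hsmall _ (lt_trans (lt_of_le_of_lt (mk_subtype_le _) hQ) h2κ)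
    · have hcard : #(ULift.{u} Bool) < Order.succ #Q := by
        have h2 : #(ULift.{u} Bool) = 2 := by simp
        rw [h2]
        exact Order.lt_succ_iff.mpr hQ
      have key := hsum (ULift.{u} Bool) inferInstance Finite.to_wellFoundedLT hcard
        (fun i => if i.down then B else A)
        (by
          intro i j hij x hx y hy
          have h' : i.down < j.down := hij
          have hd : i.down = false ∧ j.down = true := by
            revert h'; cases i.down <;> cases j.down <;> decide
          simp only [hd.1, hd.2, if_true, Bool.false_eq_true, if_false] at hx hy
          exact hAB x hx y hy)
        (by intro i; cases hi : i.down <;> simp [hi] <;> assumption)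
      have hun : A ∪ B = ⋃ i : ULift.{u} Bool, if i.down then B else A := by
        ext x
        simp only [mem_iUnion, mem_union]
        constructor
        · rintro (h | h)
          · exact ⟨⟨false⟩, by simpa using h⟩
          · exact ⟨⟨true⟩, by simpa using h⟩
        · rintro ⟨i, hi⟩
          cases h : i.down <;> rw [h] at hi <;> simp at hi <;> tauto
      rw [hun]
      exact key
  -- normalized forms
  have get : ∀ {a b : Q}, a ≤ b → IntervalEquiv K a b → K (Set.Icc a b) := by
    intro a b h hab
    have h' : K (Set.Icc (min a b) (max a b)) := hab
    rwa [min_eq_left h, max_eq_right h] at h'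
  have put : ∀ {a b : Q}, a ≤ b → K (Set.Icc a b) → IntervalEquiv K a b := by
    intro a b h hab
    show K (Set.Icc (min a b) (max a b))
    rwa [min_eq_left h, max_eq_right h]
  have hrefl : ∀ a : Q, IntervalEquiv K a a := by
    intro a
    refine put le_rfl (hsmall _ ?_)
    rw [Set.Icc_self, mk_singleton]
    exact lt_of_lt_of_le one_lt_aleph0 hκ
  have hsymm : ∀ {a b : Q}, IntervalEquiv K a b → IntervalEquiv K b a := by
    intro a b h
    show K (Set.Icc (min b a) (max b a))
    rw [min_comm, max_comm]
    exact h
  have htrans3 : ∀ a b c : Q, a ≤ b → b ≤ c →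
      K (Set.Icc a b) → K (Set.Icc b c) → K (Set.Icc a c) := by
    intro a b c h1 h2 k1 k2
    refine hsub _ (Set.Icc a b ∪ Set.Icc b c ∩ Set.Ioi b) ?_ ?_
    · intro x hx
      rcases le_or_gt x b with h | h
      · exact Or.inl ⟨hx.1, h⟩
      · exact Or.inr ⟨⟨h.le, hx.2⟩, h⟩
    · exact hpair _ _ k1 (hsub _ _ inter_subset_left k2)
        (fun x hx y hy => lt_of_le_of_lt hx.2 hy.2)
  have htrans : ∀ {a b c : Q}, IntervalEquiv K a b → IntervalEquiv K b c →
      IntervalEquiv K a c := by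
    intro a b c hab hbc
    rcases le_total a b with h1 | h1 <;> rcases le_total b c with h2 | h2
    · exact put (h1.trans h2) (htrans3 a b c h1 h2 (get h1 hab) (get h2 hbc))
    · rcases le_total a c with h3 | h3
      · exact put h3 (hsub _ _ (Set.Icc_subset_Icc le_rfl h2) (get h1 hab))
      · exact hsymm (put h3 (hsub _ _ (Set.Icc_subset_Icc le_rfl h1) (get h2 (hsymm hbc))))
    · rcases le_total a c with h3 | h3
      · exact put h3 (hsub _ _ (Set.Icc_subset_Icc h1 le_rfl) (get h2 hbc))
      · exact hsymm (put h3 (hsub _ _ (Set.Icc_subset_Icc h2 le_rfl) (get h1 (hsymm hab))))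
    · exact hsymm (put (h2.trans h1)
        (htrans3 c b a h2 h1 (get h2 (hsymm hbc)) (get h1 (hsymm hab))))
  refine ⟨⟨hrefl, hsymm, htrans⟩, ?_, ?_⟩
  · -- each class is in K
    intro a
    have hKp : K {b | IntervalEquiv K a b ∧ a ≤ b} := by
      refine aux_up K hsub hsum a _ ?_
      intro b hb
      exact ⟨hb.2, get hb.2 hb.1⟩
    have hKm : K {b | IntervalEquiv K a b ∧ b < a} := by
      refine aux_down K hsub hsum' a _ ?_
      intro b hb
      exact ⟨hb.2.le, get hb.2.le (hsymm hb.1)⟩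
    have hun : {b : Q | IntervalEquiv K a b} =
        {b | IntervalEquiv K a b ∧ b < a} ∪ {b | IntervalEquiv K a b ∧ a ≤ b} := by
      ext b
      constructor
      · intro hb
        rcases lt_or_ge b a with h | h
        · exact Or.inl ⟨hb, h⟩
        · exact Or.inr ⟨hb, h⟩
      · rintro (h | h) <;> exact h.1
    rw [hun]
    exact hpair _ _ hKm hKp (fun x hx y hy => lt_of_lt_of_le hx.2 hy.2)
  · -- classes are ordered
    intro a b c d hab hnab hac hbd
    by_contra hcd
    push_neg at hcd
    apply hnab
    refine put hab.le ?_
    have hA : K (Set.Icc a b ∩ Set.Iic c) := by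
      refine hsub _ (Set.Icc (min a c) (max a c)) ?_ hac
      intro x hx
      exact ⟨le_trans (min_le_left _ _) hx.1.1, le_trans hx.2 (le_max_right _ _)⟩
    have hB : K (Set.Icc a b ∩ Set.Ioi c) := by
      refine hsub _ (Set.Icc (min b d) (max b d)) ?_ hbd
      intro x hx
      exact ⟨le_trans (min_le_right _ _) (le_trans hcd hx.2.le),
        le_trans hx.1.2 (le_max_left _ _)⟩
    have hun : Set.Icc a b = Set.Icc a b ∩ Set.Iic c ∪ Set.Icc a b ∩ Set.Ioi c := by
      ext x
      constructor
      · intro hx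
        rcases le_or_gt x c with h | h
        · exact Or.inl ⟨hx, h⟩
        · exact Or.inr ⟨hx, h⟩
      · rintro (h | h) <;> exact h.1
    rw [hun]
    exact hpair _ _ hA hB (fun x hx y hy => lt_of_le_of_lt hx.2 hy.2)
end

section
/- Let L₀ be the lexicographic sum along ω* (the inverse of ω) of copies of the ordinal κ, where κ is a regular uncountable cardinal. Then L₀ is not weakly κ-dense and has no strictly decreasing sequence of length κ. -/
open Cardinal Set

universe u

/-- The lexicographic sum along ω* of copies of κ is not weakly κ-dense and has no
strictly decreasing κ-sequence, for κ regular uncountable. -/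
theorem stmt_16 (κ : Cardinal.{0}) (hκ : κ.IsRegular) (hunc : ℵ₀ < κ) :
    ¬ WeaklyDense κ (ℕᵒᵈ ×ₗ κ.ord.ToType) ∧
    ¬ ∃ f : κ.ord.ToType → ℕᵒᵈ ×ₗ κ.ord.ToType, StrictAnti f := by
  have hκpos : (0 : Cardinal) < κ := lt_trans Cardinal.aleph0_pos hunc
  have hord : (1 : Ordinal) < κ.ord := by
    have := Cardinal.ord_aleph0 ▸ Cardinal.ord_lt_ord.2 hunc
    exact lt_of_lt_of_le (by simpa using Ordinal.one_lt_omega0) this.le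
  have hcard : #κ.ord.ToType = κ := by rw [Cardinal.mk_toType, Cardinal.card_ord]
  constructor
  · -- not weakly dense
    rintro ⟨-, hdense⟩
    set e := (Ordinal.ToType.mk (o := κ.ord)) with he
    have h01 : (⟨0, lt_trans zero_lt_one hord⟩ : Set.Iio κ.ord) < ⟨1, hord⟩ :=
      Subtype.mk_lt_mk.2 zero_lt_one
    set x₀ : κ.ord.ToType := e ⟨0, lt_trans zero_lt_one hord⟩ with hx₀
    set x₁ : κ.ord.ToType := e ⟨1, hord⟩ with hx₁
    have hx : x₀ < x₁ := e.strictMono h01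
    have hlt : (toLex ((OrderDual.toDual 0 : ℕᵒᵈ), x₀) : ℕᵒᵈ ×ₗ κ.ord.ToType) <
        toLex ((OrderDual.toDual 0 : ℕᵒᵈ), x₁) := by
      rw [Prod.Lex.lt_iff]; exact Or.inr ⟨rfl, hx⟩
    have := hdense _ _ hlt
    have hempty : {z : ℕᵒᵈ ×ₗ κ.ord.ToType |
        toLex ((OrderDual.toDual 0 : ℕᵒᵈ), x₀) < z ∧
        z < toLex ((OrderDual.toDual 0 : ℕᵒᵈ), x₁)} = ∅ := by
      ext z
      simp only [Set.mem_setOf_eq, Set.mem_empty_iff_false, iff_false, not_and]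
      intro h1 h2
      rcases Prod.Lex.lt_iff.1 h1 with h | ⟨hfst, hsnd⟩
      · rcases Prod.Lex.lt_iff.1 h2 with h' | ⟨hfst', -⟩
        · exact absurd (lt_trans h h') (lt_irrefl _)
        · exact absurd (hfst' ▸ h) (lt_irrefl _)
      · rcases Prod.Lex.lt_iff.1 h2 with h' | ⟨-, hsnd'⟩
        · exact absurd (hfst ▸ h') (lt_irrefl _)
        · -- x₀ < z.2 < x₁ with 0 and 1 adjacent
          have h0 : (⟨0, lt_trans zero_lt_one hord⟩ : Set.Iio κ.ord) <
              e.symm (ofLex z).2 := by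
            have h := e.symm.strictMono (show x₀ < (ofLex z).2 from hsnd)
            rw [hx₀, OrderIso.symm_apply_apply] at h
            exact h
          have h1' : e.symm (ofLex z).2 < ⟨1, hord⟩ := by
            have h := e.symm.strictMono (show (ofLex z).2 < x₁ from hsnd')
            rw [hx₁, OrderIso.symm_apply_apply] at h
            exact h
          have hv0 : (0 : Ordinal) < (e.symm (ofLex z).2 : Ordinal) := h0
          have hv1 : ((e.symm (ofLex z).2 : Set.Iio κ.ord) : Ordinal) < 1 := h1'
          rw [Ordinal.lt_one_iff_zero] at hv1
          exact absurd (hv1 ▸ hv0) (lt_irrefl _)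
    rw [hempty] at this
    simp only [Cardinal.mk_emptyCollection] at this
    exact absurd (lt_of_lt_of_le hκpos this) (lt_irrefl _)
  · -- no strictly decreasing κ-sequence
    rintro ⟨f, hf⟩
    -- fibers over the first coordinate are finite
    have hfib : ∀ m : ℕ, Set.Finite {i : κ.ord.ToType |
        OrderDual.ofDual (ofLex (f i)).1 = m} := by
      intro m
      by_contra hinf
      set S := {i : κ.ord.ToType | OrderDual.ofDual (ofLex (f i)).1 = m} with hS
      -- get a strictly monotone ℕ-sequence in S
      haveI : Infinite S := Set.Infinite.to_subtype hinf
      let u : ℕ ↪ S := Infinite.natEmbedding S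
      have hpwo : (Set.univ : Set κ.ord.ToType).IsPWO := by
        apply Set.IsWF.isPWO
        exact Set.wellFoundedOn_univ.2 (IsWellFounded.wf)
      obtain ⟨g, hg⟩ := hpwo.exists_monotone_subseq (f := fun n => (u n : κ.ord.ToType))
        (fun n => Set.mem_univ _)
      have hmono : StrictMono (fun n => ((u (g n)) : κ.ord.ToType)) := by
        have hinj : Function.Injective (fun n => ((u (g n)) : κ.ord.ToType)) := by
          intro a b hab
          exact g.injective (u.injective (Subtype.ext hab))
        exact Monotone.strictMono_of_injective (fun a b hab => hg hab) hinj
      -- second coordinates give a strictly decreasing ℕ-sequence in a well-order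
      set v : ℕ → κ.ord.ToType := fun n => (ofLex (f (u (g n)))).2 with hv
      have hanti : ∀ n : ℕ, v (n + 1) < v n := by
        intro n
        have hlt := hf (hmono (Nat.lt_succ_self n))
        rcases Prod.Lex.lt_iff.1 hlt with h | ⟨-, hsnd⟩
        · -- first coordinates are equal (both in S, fiber m)
          exfalso
          have e1 : OrderDual.ofDual (ofLex (f ((u (g n)) : κ.ord.ToType))).1 = m :=
            (u (g n)).2
          have e2 : OrderDual.ofDual (ofLex (f ((u (g (n+1))) : κ.ord.ToType))).1 = m :=
            (u (g (n+1))).2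
          have : (ofLex (f ((u (g (n+1))) : κ.ord.ToType))).1 =
              (ofLex (f ((u (g n)) : κ.ord.ToType))).1 := by
            exact congrArg OrderDual.toDual (e2.trans e1.symm)
          exact absurd (this ▸ h) (lt_irrefl _)
        · exact hsnd
      have hsa : StrictAnti v := strictAnti_nat_of_succ_lt hanti
      -- contradiction with well-foundedness
      obtain ⟨n, hn⟩ := (IsWellFounded.wf (r := ((· < ·) : κ.ord.ToType →
        κ.ord.ToType → Prop))).has_min (Set.range v) (Set.range_nonempty v)
      obtain ⟨k, hk⟩ := hn.1
      exact hn.2 (v (k + 1)) ⟨k + 1, rfl⟩ (hk ▸ hanti k)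
    -- so the whole type is countable
    have hcov : (Set.univ : Set κ.ord.ToType) =
        ⋃ m : ℕ, {i : κ.ord.ToType | OrderDual.ofDual (ofLex (f i)).1 = m} := by
      ext i
      simp only [Set.mem_univ, Set.mem_iUnion, Set.mem_setOf_eq, true_iff]
      exact ⟨_, rfl⟩
    have hcount : (Set.univ : Set κ.ord.ToType).Countable := by
      rw [hcov]
      exact Set.countable_iUnion fun m => (hfib m).countable
    haveI : Countable κ.ord.ToType := Set.countable_univ_iff.1 hcount
    have : κ ≤ ℵ₀ := hcard ▸ Cardinal.mk_le_aleph0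
    exact absurd (lt_of_lt_of_le hunc this) (lt_irrefl _)
end
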